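/- arXiv:1109.2628 — 5 statements merged into one kernel-verified Lean document; each statement's English description precedes it below -/
import Mathlib

section
/- Let T : [0,1) → [0,1) have full increasing branches over the nodes 0 = a_0 < a_1 < ⋯ < a_N = 1, with branch inverses τ_0,…,τ_{N−1}, and let μ be a probability measure on [0,1) that is absolutely continuous with respect to Lebesgue measure. Set F₀(x) = μ([0,x]). Then for all x, y ∈ (0,1), writing n₁ for the unique index k with x ∈ [a_k, a_{k+1}), one has μ{u ∈ [0,1) : u ≤ x and T(u) ≤ y} = Σ_{k=0}^{n₁−1} (F₀(τ_k(y)) − F₀(a_k)) + min{F₀(x), F₀(τ_{n₁}(y))} − F₀(a_{n₁}), where the sum is empty when n₁ = 0. -/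
open Set MeasureTheory

theorem joint_distribution_formula_full_branches
    (T : ℝ → ℝ) (N : ℕ) (hN : 1 ≤ N) (a : ℕ → ℝ) (τ : ℕ → ℝ → ℝ)
    (ha0 : a 0 = 0) (haN : a N = 1) (hamono : StrictMonoOn a (Set.Iic N))
    (hbranch : ∀ k < N,
      ContinuousOn T (Ico (a k) (a (k + 1))) ∧
      StrictMonoOn T (Ico (a k) (a (k + 1))) ∧
      T (a k) = 0 ∧ T '' Ico (a k) (a (k + 1)) = Ico (0 : ℝ) 1)
    (hτ : ∀ k < N, (∀ x ∈ Ico (a k) (a (k + 1)), τ k (T x) = x) ∧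
      ∀ y ∈ Ico (0 : ℝ) 1, τ k y ∈ Ico (a k) (a (k + 1)) ∧ T (τ k y) = y)
    (μ : Measure ℝ) [IsProbabilityMeasure μ]
    (hμ1 : μ (Ico (0 : ℝ) 1) = 1) (hac : μ ≪ volume)
    (F₀ : ℝ → ℝ) (hF₀ : ∀ x, F₀ x = (μ (Icc 0 x)).toReal)
    (x y : ℝ) (hx : x ∈ Ioo (0 : ℝ) 1) (hy : y ∈ Ioo (0 : ℝ) 1)
    (n₁ : ℕ) (hn₁ : n₁ < N) (hxn : x ∈ Ico (a n₁) (a (n₁ + 1))) :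
    (μ {u | u ∈ Ico (0 : ℝ) 1 ∧ u ≤ x ∧ T u ≤ y}).toReal =
      (∑ k ∈ Finset.range n₁, (F₀ (τ k y) - F₀ (a k))) +
        (min (F₀ x) (F₀ (τ n₁ y)) - F₀ (a n₁)) := by
  -- monotonicity of a on Iic N
  have hamon : ∀ i j : ℕ, i ≤ j → j ≤ N → a i ≤ a j := by
    intro i j hij hjN
    exact hamono.monotoneOn (Set.mem_Iic.2 (hij.trans hjN)) (Set.mem_Iic.2 hjN) hij
  have hy' : y ∈ Ico (0:ℝ) 1 := ⟨hy.1.le, hy.2⟩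
  have hτmem : ∀ k, k < N → τ k y ∈ Ico (a k) (a (k+1)) ∧ T (τ k y) = y :=
    fun k hk => (hτ k hk).2 y hy'
  -- characterization of T u ≤ y
  have hTle : ∀ k, k < N → ∀ u ∈ Ico (a k) (a (k+1)), (T u ≤ y ↔ u ≤ τ k y) := by
    intro k hk u hu
    obtain ⟨hτm, hτy⟩ := hτmem k hk
    constructor
    · intro h
      by_contra hlt
      push_neg at hlt
      have := (hbranch k hk).2.1 hτm hu hlt
      rw [hτy] at this
      exact absurd h (not_le.2 this)
    · intro h
      have := (hbranch k hk).2.1.monotoneOn hu hτm h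
      rwa [hτy] at this
  -- the cut points
  set c : ℕ → ℝ := fun k => if k = n₁ then min x (τ n₁ y) else τ k y with hcdef
  have hckmem : ∀ k, k ≤ n₁ → a k ≤ c k ∧ c k < a (k+1) := by
    intro k hk
    by_cases hkk : k = n₁
    · subst hkk
      constructor
      · simp only [hcdef, if_pos rfl]
        exact le_min hxn.1 (hτmem k hn₁).1.1
      · simp only [hcdef, if_pos rfl]
        exact lt_of_le_of_lt (min_le_left _ _) hxn.2
    · have hkN : k < N := lt_of_le_of_lt hk hn₁
      simp only [hcdef, if_neg hkk]
      exact ⟨(hτmem k hkN).1.1, (hτmem k hkN).1.2⟩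
  have hck_le_τ : ∀ k, k ≤ n₁ → c k ≤ τ k y := by
    intro k hk
    by_cases hkk : k = n₁
    · subst hkk; simp only [hcdef, if_pos rfl]; exact min_le_right _ _
    · simp only [hcdef, if_neg hkk]; exact le_rfl
  -- covering of [0,1) by branches
  have cover : ∀ u ∈ Ico (0:ℝ) 1, ∃ k, k < N ∧ u ∈ Ico (a k) (a (k+1)) := by
    intro u hu
    have key : ∀ m, m ≤ N → u < a m → ∃ k, k < m ∧ u ∈ Ico (a k) (a (k+1)) := by
      intro m
      induction m with
      | zero => intro _ h; rw [ha0] at h; exact absurd hu.1 (not_le.2 h)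
      | succ m ih =>
        intro hm h
        by_cases hc : a m ≤ u
        · exact ⟨m, Nat.lt_succ_self m, hc, h⟩
        · obtain ⟨k, hk, hk2⟩ := ih (Nat.le_of_succ_le hm) (not_le.1 hc)
          exact ⟨k, hk.trans (Nat.lt_succ_self m), hk2⟩
    exact key N le_rfl (by rw [haN]; exact hu.2)
  -- a k ≥ 0, a (k+1) ≤ 1 for k < N
  have ha_nonneg : ∀ k, k ≤ N → 0 ≤ a k := by
    intro k hk; rw [← ha0]; exact hamon 0 k (Nat.zero_le k) hk
  have ha_le_one : ∀ k, k ≤ N → a k ≤ 1 := by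
    intro k hk; rw [← haN]; exact hamon k N hk le_rfl
  -- set equality
  have hSeq : {u | u ∈ Ico (0:ℝ) 1 ∧ u ≤ x ∧ T u ≤ y}
      = ⋃ k ∈ Finset.range (n₁+1), Icc (a k) (c k) := by
    ext u
    simp only [mem_setOf_eq, mem_iUnion, Finset.mem_range, mem_Icc, exists_prop]
    constructor
    · rintro ⟨hu01, hux, hTu⟩
      obtain ⟨k, hkN, hk1, hk2⟩ := cover u hu01
      have hkle : k ≤ n₁ := by
        by_contra h
        push_neg at h
        have : a (n₁+1) ≤ a k := hamon (n₁+1) k h hkN.le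
        have : a (n₁+1) ≤ u := this.trans hk1
        exact absurd (lt_of_le_of_lt (this.trans hux) hxn.2) (lt_irrefl _)
      refine ⟨k, Nat.lt_succ_of_le hkle, hk1, ?_⟩
      have huτ : u ≤ τ k y := (hTle k hkN u ⟨hk1, hk2⟩).1 hTu
      by_cases hkk : k = n₁
      · subst hkk
        simp only [hcdef, if_pos rfl]
        exact le_min hux huτ
      · simp only [hcdef, if_neg hkk]
        exact huτ
    · rintro ⟨k, hk, h1, h2⟩
      have hkle : k ≤ n₁ := Nat.lt_succ_iff.1 hk
      have hkN : k < N := lt_of_le_of_lt hkle hn₁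
      have hu2 : u < a (k+1) := lt_of_le_of_lt h2 (hckmem k hkle).2
      have hux : u ≤ x := by
        by_cases hkk : k = n₁
        · subst hkk
          exact h2.trans ((by simp only [hcdef, if_pos rfl]; exact min_le_left _ _ :
            c k ≤ x))
        · have hkn : k + 1 ≤ n₁ := Nat.lt_of_le_of_ne hkle hkk
          exact (hu2.le.trans (hamon (k+1) n₁ hkn hn₁.le)).trans hxn.1
      refine ⟨⟨(ha_nonneg k hkN.le).trans h1,
        lt_of_lt_of_le hu2 (ha_le_one (k+1) hkN)⟩, hux, ?_⟩
      exact (hTle k hkN u ⟨h1, hu2⟩).2 (h2.trans (hck_le_τ k hkle))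
  -- measure of each Icc
  have hIcc : ∀ p q : ℝ, 0 ≤ p → p ≤ q → (μ (Icc p q)).toReal = F₀ q - F₀ p := by
    intro p q hp hpq
    have hsing : μ {p} = 0 := hac (Real.volume_singleton)
    have hU : Icc 0 p ∪ Icc p q = Icc 0 q := Icc_union_Icc_eq_Icc hp hpq
    have hdisj0 : MeasureTheory.AEDisjoint μ (Icc 0 p) (Icc p q) := by
      refine measure_mono_null ?_ hsing
      rintro u ⟨⟨_, h1⟩, ⟨h2, _⟩⟩
      exact mem_singleton_iff.2 (le_antisymm h1 h2)
    have hadd := measure_union₀ (measurableSet_Icc.nullMeasurableSet) hdisj0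
    rw [hU] at hadd
    rw [hF₀, hF₀, hadd, ENNReal.toReal_add (measure_ne_top _ _) (measure_ne_top _ _)]
    ring
  -- disjointness
  have hdisj : (↑(Finset.range (n₁+1)) : Set ℕ).PairwiseDisjoint
      (fun k => Icc (a k) (c k)) := by
    intro i hi j hj hij
    simp only [Finset.coe_range, mem_Iio] at hi hj
    have key : ∀ i j : ℕ, i < j → j ≤ n₁ → Disjoint (Icc (a i) (c i)) (Icc (a j) (c j)) := by
      intro i j hlt hjn
      rw [Set.disjoint_left]
      rintro u ⟨_, hu1⟩ ⟨hu2, _⟩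
      have h1 : c i < a (i+1) := (hckmem i (hlt.le.trans hjn)).2
      have h2 : a (i+1) ≤ a j := hamon (i+1) j hlt (hjn.trans hn₁.le)
      exact absurd ((hu1.trans_lt h1).trans_le (h2.trans hu2)) (lt_irrefl _)
    rcases lt_or_gt_of_ne hij with h | h
    · exact key i j h (Nat.lt_succ_iff.1 hj)
    · exact (key j i h (Nat.lt_succ_iff.1 hi)).symm
  rw [hSeq, measure_biUnion_finset hdisj (fun k _ => measurableSet_Icc),
    ENNReal.toReal_sum (fun k _ => measure_ne_top _ _)]
  have hterm : ∀ k ∈ Finset.range (n₁+1),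
      (μ (Icc (a k) (c k))).toReal = F₀ (c k) - F₀ (a k) := by
    intro k hk
    have hkle : k ≤ n₁ := Nat.lt_succ_iff.1 (Finset.mem_range.1 hk)
    exact hIcc (a k) (c k) (ha_nonneg k ((hkle.trans hn₁.le).trans (Nat.le_refl N)))
      (hckmem k hkle).1
  rw [Finset.sum_congr rfl hterm, Finset.sum_range_succ]
  have hF₀mono : Monotone F₀ := by
    intro p q hpq
    rw [hF₀, hF₀]
    exact ENNReal.toReal_mono (measure_ne_top _ _) (measure_mono (Icc_subset_Icc_right hpq))
  have hlast : F₀ (c n₁) = min (F₀ x) (F₀ (τ n₁ y)) := by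
    simp only [hcdef, if_pos rfl]
    exact hF₀mono.map_min
  rw [hlast]
  congr 1
  apply Finset.sum_congr rfl
  intro k hk
  have hkk : k ≠ n₁ := Nat.ne_of_lt (Finset.mem_range.1 hk)
  simp only [hcdef, if_neg hkk]
end

section
/- Let T : [0,1) → [0,1) have full increasing branches over the nodes 0 = a_0 < a_1 < ⋯ < a_N = 1, with branch inverses τ_0,…,τ_{N−1}, and let μ be a probability measure on [0,1) that is absolutely continuous with respect to Lebesgue measure with a continuous, strictly positive density, so that F₀(x) = μ([0,x]) is a homeomorphism of [0,1]. For each k let ℱ_k : [0,1] → [F₀(a_k), F₀(a_{k+1})] be the continuous extension of F₀ ∘ τ_k ∘ F₀^{−1} with ℱ_k(1) = F₀(a_{k+1}). Then the support of the pushforward of μ under the map u ↦ (F₀(u), F₀(T(u))) (the copula measure of the pair (U, T(U)) with U distributed as μ) equals the union ⋃_{k=0}^{N−1} {(ℱ_k(v), v) : v ∈ [0,1]}. -/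
open Set MeasureTheory

theorem support_of_copula_measure
    (T : ℝ → ℝ) (N : ℕ) (hN : 1 ≤ N) (a : ℕ → ℝ) (τ : ℕ → ℝ → ℝ)
    (ha0 : a 0 = 0) (haN : a N = 1) (hamono : StrictMonoOn a (Set.Iic N))
    (hbranch : ∀ k < N,
      ContinuousOn T (Ico (a k) (a (k + 1))) ∧
      StrictMonoOn T (Ico (a k) (a (k + 1))) ∧
      T (a k) = 0 ∧ T '' Ico (a k) (a (k + 1)) = Ico (0 : ℝ) 1)
    (hτ : ∀ k < N, (∀ x ∈ Ico (a k) (a (k + 1)), τ k (T x) = x) ∧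
      ∀ y ∈ Ico (0 : ℝ) 1, τ k y ∈ Ico (a k) (a (k + 1)) ∧ T (τ k y) = y)
    (μ : Measure ℝ) [IsProbabilityMeasure μ] (hμ1 : μ (Ico (0 : ℝ) 1) = 1)
    (ρ : ℝ → ℝ) (hρc : ContinuousOn ρ (Icc 0 1)) (hρpos : ∀ x ∈ Icc (0 : ℝ) 1, 0 < ρ x)
    (hμρ : μ = (volume.restrict (Ico (0 : ℝ) 1)).withDensity fun x => ENNReal.ofReal (ρ x))
    (F₀ Finv : ℝ → ℝ) (hF₀ : ∀ x, F₀ x = (μ (Icc 0 x)).toReal)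
    (hinv : Set.InvOn Finv F₀ (Icc 0 1) (Icc 0 1))
    (ℱ : ℕ → ℝ → ℝ)
    (hℱc : ∀ k < N, ContinuousOn (ℱ k) (Icc 0 1))
    (hℱ : ∀ k < N, ∀ v ∈ Ico (0 : ℝ) 1, ℱ k v = F₀ (τ k (Finv v)))
    (hℱ1 : ∀ k < N, ℱ k 1 = F₀ (a (k + 1))) :
    IsClosed (⋃ k ∈ Finset.range N, (fun v => (ℱ k v, v)) '' Icc (0 : ℝ) 1) ∧
    (Measure.map (fun u => (F₀ u, F₀ (T u))) μ)
        (⋃ k ∈ Finset.range N, (fun v => (ℱ k v, v)) '' Icc (0 : ℝ) 1)ᶜ = 0 ∧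
    ∀ F : Set (ℝ × ℝ), IsClosed F →
      (Measure.map (fun u => (F₀ u, F₀ (T u))) μ) Fᶜ = 0 →
      (⋃ k ∈ Finset.range N, (fun v => (ℱ k v, v)) '' Icc (0 : ℝ) 1) ⊆ F := by
  classical
  set G : ℝ → ℝ × ℝ := fun u => (F₀ u, F₀ (T u)) with hG
  set U : Set (ℝ × ℝ) := ⋃ k ∈ Finset.range N, (fun v => (ℱ k v, v)) '' Icc (0 : ℝ) 1 with hU
  -- basic facts on `a`
  have haineq : ∀ k < N, a k < a (k + 1) := by
    intro k hk
    exact hamono (mem_Iic.2 (le_of_lt hk)) (mem_Iic.2 hk) (Nat.lt_succ_self k)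
  have hak0 : ∀ k ≤ N, (0 : ℝ) ≤ a k := by
    intro k hk
    rcases Nat.eq_zero_or_pos k with h | h
    · simp [h, ha0]
    · rw [← ha0]
      exact le_of_lt (hamono (mem_Iic.2 (Nat.zero_le N)) (mem_Iic.2 hk) h)
  have hak1 : ∀ k ≤ N, a k ≤ 1 := by
    intro k hk
    rcases eq_or_lt_of_le hk with h | h
    · simp [h, haN]
    · rw [← haN]
      exact le_of_lt (hamono (mem_Iic.2 hk) (mem_Iic.2 le_rfl) h)
  have hpieceSub : ∀ k < N, Ico (a k) (a (k + 1)) ⊆ Ico (0 : ℝ) 1 := by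
    intro k hk x hx
    exact ⟨le_trans (hak0 k (le_of_lt hk)) hx.1, lt_of_lt_of_le hx.2 (hak1 (k + 1) hk)⟩
  -- positivity of μ on subintervals
  have hpos : ∀ b c : ℝ, 0 ≤ b → b < c → c ≤ 1 → 0 < μ (Ioo b c) := by
    intro b c hb hbc hc
    obtain ⟨x₀, hx₀, hmin⟩ := isCompact_Icc.exists_isMinOn (by
      exact ⟨0, by norm_num⟩ : (Icc (0:ℝ) 1).Nonempty) hρc
    have hc₀ : 0 < ρ x₀ := hρpos x₀ hx₀
    have hsub : Ioo b c ⊆ Ico (0 : ℝ) 1 := fun x hx => ⟨le_trans hb (le_of_lt hx.1), lt_of_lt_of_le hx.2 hc⟩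
    have h1 : μ (Ioo b c) = ∫⁻ x in Ioo b c, ENNReal.ofReal (ρ x) ∂(volume.restrict (Ico (0:ℝ) 1)) := by
      rw [hμρ, withDensity_apply _ measurableSet_Ioo]
    have h2 : (volume.restrict (Ico (0:ℝ) 1)).restrict (Ioo b c) = volume.restrict (Ioo b c) := by
      rw [Measure.restrict_restrict measurableSet_Ioo, Set.inter_eq_left.2 hsub]
    have h3 : (∫⁻ _ in Ioo b c, ENNReal.ofReal (ρ x₀) ∂volume)
        ≤ ∫⁻ x in Ioo b c, ENNReal.ofReal (ρ x) ∂volume := by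
      refine lintegral_mono_ae ?_
      filter_upwards [ae_restrict_mem measurableSet_Ioo] with x hx
      exact ENNReal.ofReal_le_ofReal (hmin ((hsub.trans Ico_subset_Icc_self) hx))
    have h4 : (∫⁻ _ in Ioo b c, ENNReal.ofReal (ρ x₀) ∂volume)
        = ENNReal.ofReal (ρ x₀) * ENNReal.ofReal (c - b) := by
      rw [setLIntegral_const, Real.volume_Ioo]
    rw [h1, h2]
    refine lt_of_lt_of_le ?_ h3
    rw [h4]
    exact ENNReal.mul_pos (ne_of_gt (ENNReal.ofReal_pos.2 hc₀))
      (ne_of_gt (ENNReal.ofReal_pos.2 (sub_pos.2 hbc)))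
  -- basic facts on F₀
  have hμtop : ∀ s : Set ℝ, μ s ≠ ⊤ := fun s => measure_ne_top μ s
  have hFmono : Monotone F₀ := by
    intro x y hxy
    rw [hF₀ x, hF₀ y]
    exact ENNReal.toReal_mono (hμtop _) (measure_mono (Icc_subset_Icc le_rfl hxy))
  have hF01 : F₀ 1 = 1 := by
    have h1 : μ (Icc 0 1) = 1 := by
      refine le_antisymm prob_le_one ?_
      rw [← hμ1]
      exact measure_mono Ico_subset_Icc_self
    rw [hF₀, h1, ENNReal.toReal_one]
  have hF00 : F₀ 0 = 0 := by
    have h0 : μ (Icc (0:ℝ) 0) = 0 := by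
      rw [hμρ, Icc_self, withDensity_apply _ (measurableSet_singleton 0)]
      rw [Measure.restrict_restrict (measurableSet_singleton 0)]
      have : volume ({(0:ℝ)} ∩ Ico (0:ℝ) 1) = 0 :=
        le_antisymm (le_trans (measure_mono Set.inter_subset_left) (by simp)) zero_le
      rw [Measure.restrict_eq_zero.2 this]
      simp
    rw [hF₀, h0, ENNReal.toReal_zero]
  have hFnonneg : ∀ x, 0 ≤ F₀ x := fun x => by rw [hF₀]; exact ENNReal.toReal_nonneg
  have hFle1 : ∀ x, F₀ x ≤ 1 := by
    intro x
    rw [hF₀]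
    have h := prob_le_one (μ := μ) (s := Icc 0 x)
    simpa using ENNReal.toReal_mono ENNReal.one_ne_top h
  have hFlt : ∀ x ∈ Ico (0 : ℝ) 1, F₀ x < 1 := by
    intro x hx
    have hdisj : Disjoint (Icc (0:ℝ) x) (Ioo x 1) := by
      refine Set.disjoint_left.2 fun y hy hy' => ?_
      exact absurd hy.2 (not_le.2 hy'.1)
    have hunion : Icc (0:ℝ) x ∪ Ioo x 1 = Ico (0:ℝ) 1 := by
      ext y
      constructor
      · rintro (hy | hy)
        · exact ⟨hy.1, lt_of_le_of_lt hy.2 hx.2⟩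
        · exact ⟨le_trans hx.1 (le_of_lt hy.1), hy.2⟩
      · intro hy
        rcases le_or_gt y x with h | h
        · exact Or.inl ⟨hy.1, h⟩
        · exact Or.inr ⟨h, hy.2⟩
    have hsum : μ (Icc 0 x) + μ (Ioo x 1) = 1 := by
      rw [← measure_union hdisj measurableSet_Ioo, hunion, hμ1]
    have hne : μ (Icc 0 x) ≠ 1 := by
      intro h
      rw [h] at hsum
      have : μ (Ioo x 1) = 0 := by
        have h' : (1 : ENNReal) + μ (Ioo x 1) = 1 + 0 := by simpa using hsum
        exact (ENNReal.add_right_inj ENNReal.one_ne_top).1 h'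
      exact absurd this (ne_of_gt (hpos x 1 hx.1 hx.2 le_rfl))
    rw [hF₀]
    have hlt : μ (Icc 0 x) < 1 := lt_of_le_of_ne prob_le_one hne
    have := (ENNReal.toReal_lt_toReal (hμtop _) ENNReal.one_ne_top).2 hlt
    simpa using this
  -- Finv maps Icc 0 1 into itself
  have hFinv_mem : ∀ v ∈ Icc (0:ℝ) 1, Finv v ∈ Icc (0:ℝ) 1 := by
    intro v hv
    have hFv : F₀ (Finv v) = v := hinv.2 hv
    constructor
    · by_contra h
      push_neg at h
      have h1 : v ≤ 0 := by
        rw [← hFv, ← hF00]; exact hFmono (le_of_lt h)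
      have hv0 : v = 0 := le_antisymm h1 hv.1
      have : Finv 0 = 0 := by
        have := hinv.1 (Set.mem_Icc.2 ⟨le_rfl, by norm_num⟩ : (0:ℝ) ∈ Icc (0:ℝ) 1)
        rwa [hF00] at this
      rw [hv0, this] at h
      exact absurd h (lt_irrefl 0)
    · by_contra h
      push_neg at h
      have h1 : (1:ℝ) ≤ v := by
        rw [← hFv, ← hF01]; exact hFmono (le_of_lt h)
      have hv1 : v = 1 := le_antisymm hv.2 h1
      have : Finv 1 = 1 := by
        have := hinv.1 (Set.mem_Icc.2 ⟨by norm_num, le_rfl⟩ : (1:ℝ) ∈ Icc (0:ℝ) 1)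
        rwa [hF01] at this
      rw [hv1, this] at h
      exact absurd h (lt_irrefl 1)
  -- covering of [0,1) by the branch domains
  have hcover : ∀ u ∈ Ico (0 : ℝ) 1, ∃ k < N, u ∈ Ico (a k) (a (k + 1)) := by
    intro u hu
    have hP0 : a 0 ≤ u := by rw [ha0]; exact hu.1
    obtain ⟨K, hKle, hKspec, hKmax⟩ :
        ∃ K, K ≤ N ∧ a K ≤ u ∧ ∀ m, K < m → m ≤ N → ¬ a m ≤ u :=
      ⟨Nat.findGreatest (fun k => a k ≤ u) N, Nat.findGreatest_le N,
        Nat.findGreatest_spec (P := fun k => a k ≤ u) (Nat.zero_le N) hP0,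
        fun m h1 h2 => Nat.findGreatest_is_greatest (P := fun k => a k ≤ u) h1 h2⟩
    have hKlt : K < N := by
      rcases lt_or_eq_of_le hKle with h | h
      · exact h
      · exfalso
        rw [h] at hKspec
        rw [haN] at hKspec
        exact absurd hu.2 (not_lt.2 hKspec)
    refine ⟨K, hKlt, hKspec, ?_⟩
    by_contra h
    push_neg at h
    exact hKmax (K + 1) (Nat.lt_succ_self K) hKlt h
  -- a.e. membership of [0,1)
  have haemem : ∀ᵐ u ∂μ, u ∈ Ico (0 : ℝ) 1 := by
    rw [ae_iff]
    have : {u : ℝ | ¬ u ∈ Ico (0:ℝ) 1} = (Ico (0:ℝ) 1)ᶜ := rfl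
    rw [this, measure_compl measurableSet_Ico (hμtop _), hμ1, measure_univ]
    simp
  -- the key pointwise computation
  have hGmem : ∀ u ∈ Ico (0 : ℝ) 1, G u ∈ U := by
    intro u hu
    obtain ⟨k, hk, huk⟩ := hcover u hu
    have hTu : T u ∈ Ico (0 : ℝ) 1 := by
      rw [← (hbranch k hk).2.2.2]
      exact Set.mem_image_of_mem T huk
    set v := F₀ (T u) with hv
    have hv01 : v ∈ Ico (0 : ℝ) 1 := ⟨hFnonneg _, hFlt _ hTu⟩
    have hFinvv : Finv v = T u := hinv.1 ⟨hTu.1, le_of_lt hTu.2⟩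
    have hFv : ℱ k v = F₀ u := by
      rw [hℱ k hk v hv01, hFinvv, (hτ k hk).1 u huk]
    rw [hU]
    simp only [Set.mem_iUnion]
    refine ⟨k, Finset.mem_range.2 hk, ⟨v, ⟨hv01.1, le_of_lt hv01.2⟩, ?_⟩⟩
    show (ℱ k v, v) = (F₀ u, F₀ (T u))
    rw [hFv, hv]
  -- measurability
  have hF₀meas : Measurable F₀ := hFmono.measurable
  have hGae : AEMeasurable G μ := by
    have hres : μ.restrict (Ico (0:ℝ) 1) = μ :=
      Measure.restrict_eq_self_of_ae_mem haemem
    have hUn : (⋃ k : Fin N, Ico (a (k : ℕ)) (a ((k : ℕ) + 1))) = Ico (0:ℝ) 1 := by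
      apply Set.Subset.antisymm
      · refine Set.iUnion_subset fun k => hpieceSub k k.2
      · intro u hu
        obtain ⟨k, hk, huk⟩ := hcover u hu
        exact Set.mem_iUnion.2 ⟨⟨k, hk⟩, huk⟩
    have : AEMeasurable G (μ.restrict (⋃ k : Fin N, Ico (a (k : ℕ)) (a ((k : ℕ) + 1)))) := by
      rw [aemeasurable_iUnion_iff]
      intro k
      have hT : AEMeasurable T (μ.restrict (Ico (a (k:ℕ)) (a ((k:ℕ) + 1)))) :=
        ContinuousOn.aemeasurable (hbranch k k.2).1 measurableSet_Ico
      exact (hF₀meas.aemeasurable.prodMk (hF₀meas.comp_aemeasurable hT))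
    rwa [hUn, hres] at this
  -- Part 1 : U is closed
  have hUclosed : IsClosed U := by
    rw [hU]
    refine isClosed_biUnion_finset fun k hk => ?_
    have hk' : k < N := Finset.mem_range.1 hk
    exact (isCompact_Icc.image_of_continuousOn ((hℱc k hk').prodMk continuousOn_id)).isClosed
  refine ⟨hUclosed, ?_, ?_⟩
  · -- Part 2
    rw [Measure.map_apply_of_aemeasurable hGae hUclosed.measurableSet.compl]
    refine measure_mono_null ?_ (ae_iff.1 haemem)
    intro u hu
    simp only [Set.mem_preimage, Set.mem_compl_iff] at hu
    simp only [Set.mem_setOf_eq]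
    intro humem
    exact hu (hGmem u humem)
  · -- Part 3
    intro F hF hFc
    rw [Measure.map_apply_of_aemeasurable hGae hF.measurableSet.compl] at hFc
    intro p hp
    rw [hU] at hp
    simp only [Set.mem_iUnion] at hp
    obtain ⟨k, hkr, v, hv, hpv⟩ := hp
    have hk : k < N := Finset.mem_range.1 hkr
    subst hpv
    -- D is closed
    set D : Set ℝ := Icc (0:ℝ) 1 ∩ (fun v => (ℱ k v, v)) ⁻¹' F with hD
    have hφc : ContinuousOn (fun v => (ℱ k v, v)) (Icc (0:ℝ) 1) :=
      (hℱc k hk).prodMk continuousOn_id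
    have hDclosed : IsClosed D :=
      hφc.preimage_isClosed_of_isClosed isClosed_Icc hF
    have hvD : v ∈ closure D → v ∈ D := fun h => hDclosed.closure_subset h
    have : v ∈ D := by
      apply hvD
      rw [Metric.mem_closure_iff]
      intro ε hε
      -- choose v₁ < v₂ in (v - ε, v + ε) ∩ (0, 1)
      have hlohi : max (v - ε) 0 < min (v + ε) 1 := by
        rcases hv with ⟨hv0, hv1⟩
        apply max_lt <;> apply lt_min
        · linarith
        · linarith
        · linarith
        · linarith
      set lo := max (v - ε) 0
      set hi := min (v + ε) 1
      set v₁ := lo + (hi - lo) / 3 with hv₁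
      set v₂ := lo + 2 * (hi - lo) / 3 with hv₂
      have h1 : lo < v₁ := by simp only [hv₁]; nlinarith [hlohi]
      have h2 : v₁ < v₂ := by simp only [hv₁, hv₂]; nlinarith [hlohi]
      have h3 : v₂ < hi := by simp only [hv₂]; nlinarith [hlohi]
      have hv₁mem : v₁ ∈ Ioo (0:ℝ) 1 :=
        ⟨lt_of_le_of_lt (le_max_right _ _) h1,
         lt_of_lt_of_le (lt_trans h2 h3) (min_le_right _ _)⟩
      have hv₂mem : v₂ ∈ Ioo (0:ℝ) 1 :=
        ⟨lt_trans hv₁mem.1 h2, lt_of_lt_of_le h3 (min_le_right _ _)⟩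
      set y₁ := Finv v₁ with hy₁
      set y₂ := Finv v₂ with hy₂
      have hy₁Icc : y₁ ∈ Icc (0:ℝ) 1 := hFinv_mem v₁ (Ioo_subset_Icc_self hv₁mem)
      have hy₂Icc : y₂ ∈ Icc (0:ℝ) 1 := hFinv_mem v₂ (Ioo_subset_Icc_self hv₂mem)
      have hFy₁ : F₀ y₁ = v₁ := hinv.2 (Ioo_subset_Icc_self hv₁mem)
      have hFy₂ : F₀ y₂ = v₂ := hinv.2 (Ioo_subset_Icc_self hv₂mem)
      have hy₁lt1 : y₁ < 1 := by
        rcases lt_or_eq_of_le hy₁Icc.2 with h | h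
        · exact h
        · exfalso; rw [h, hF01] at hFy₁; exact absurd hFy₁.symm (ne_of_lt hv₁mem.2)
      have hy₂lt1 : y₂ < 1 := by
        rcases lt_or_eq_of_le hy₂Icc.2 with h | h
        · exact h
        · exfalso; rw [h, hF01] at hFy₂; exact absurd hFy₂.symm (ne_of_lt hv₂mem.2)
      have hy₁Ico : y₁ ∈ Ico (0:ℝ) 1 := ⟨hy₁Icc.1, hy₁lt1⟩
      have hy₂Ico : y₂ ∈ Ico (0:ℝ) 1 := ⟨hy₂Icc.1, hy₂lt1⟩
      have hy₁y₂ : y₁ < y₂ := by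
        by_contra h
        push_neg at h
        have := hFmono h
        rw [hFy₁, hFy₂] at this
        exact absurd h2 (not_lt.2 this)
      -- τ k y₁ < τ k y₂ and both in the branch domain
      have hτ₁ := (hτ k hk).2 y₁ hy₁Ico
      have hτ₂ := (hτ k hk).2 y₂ hy₂Ico
      have hτlt : τ k y₁ < τ k y₂ := by
        by_contra h
        push_neg at h
        rcases eq_or_lt_of_le h with h' | h'
        · rw [← hτ₁.2, ← hτ₂.2, h'] at hy₁y₂
          exact absurd hy₁y₂ (lt_irrefl _)
        · have := (hbranch k hk).2.1 hτ₂.1 hτ₁.1 h'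
          rw [hτ₁.2, hτ₂.2] at this
          exact absurd (lt_trans hy₁y₂ this) (lt_irrefl _)
      -- the interval between them has positive measure and a.e. point lands in F
      have hμIoo : 0 < μ (Ioo (τ k y₁) (τ k y₂)) :=
        hpos _ _ (le_trans (hak0 k (le_of_lt hk)) hτ₁.1.1)
          hτlt (le_trans (le_of_lt hτ₂.1.2) (hak1 (k+1) hk))
      have hAfull : μ {u : ℝ | G u ∉ F} = 0 := by
        have : G ⁻¹' Fᶜ = {u : ℝ | G u ∉ F} := rfl
        rwa [this] at hFc
      have hex : ∃ u, u ∈ Ioo (τ k y₁) (τ k y₂) ∧ G u ∈ F := by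
        by_contra h
        push_neg at h
        have hsub : Ioo (τ k y₁) (τ k y₂) ⊆ {u : ℝ | G u ∉ F} := fun u hu => h u hu
        exact absurd (measure_mono_null hsub hAfull) (ne_of_gt hμIoo)
      obtain ⟨u, hu, huF⟩ := hex
      -- u lies in the branch domain
      have hupiece : u ∈ Ico (a k) (a (k + 1)) :=
        ⟨le_trans hτ₁.1.1 (le_of_lt hu.1), lt_trans hu.2 hτ₂.1.2⟩
      have hTu₁ : y₁ < T u := by
        have := (hbranch k hk).2.1 hτ₁.1 hupiece hu.1
        rwa [hτ₁.2] at this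
      have hTu₂ : T u < y₂ := by
        have := (hbranch k hk).2.1 hupiece hτ₂.1 hu.2
        rwa [hτ₂.2] at this
      have hTuIco : T u ∈ Ico (0:ℝ) 1 := ⟨le_trans hy₁Icc.1 (le_of_lt hTu₁), lt_trans hTu₂ hy₂lt1⟩
      set v' := F₀ (T u) with hv'
      have hv'₁ : v₁ ≤ v' := by rw [← hFy₁]; exact hFmono (le_of_lt hTu₁)
      have hv'₂ : v' ≤ v₂ := by rw [← hFy₂]; exact hFmono (le_of_lt hTu₂)
      have hv'Ico : v' ∈ Ico (0:ℝ) 1 := ⟨hFnonneg _, hFlt _ hTuIco⟩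
      have hFinvv' : Finv v' = T u := hinv.1 ⟨hTuIco.1, le_of_lt hTuIco.2⟩
      have hFv' : ℱ k v' = F₀ u := by
        rw [hℱ k hk v' hv'Ico, hFinvv', (hτ k hk).1 u hupiece]
      refine ⟨v', ⟨⟨hv'Ico.1, le_of_lt hv'Ico.2⟩, ?_⟩, ?_⟩
      · show (ℱ k v', v') ∈ F
        rw [hFv']
        exact huF
      · rw [Real.dist_eq, abs_lt]
        have hlo : v - ε ≤ lo := le_max_left _ _
        have hhi : hi ≤ v + ε := min_le_left _ _
        constructor
        · linarith
        · linarith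
    exact this.2
end

section
/- Let s > 0, let 2 ≤ h_2 < h_3 < ⋯ < h_n be integers, and let 0 = a_0 < a_1 < ⋯ < a_{2^{h_n}} = 1 be the nodes of T_s^{h_n} (so that T_s^{h_n} restricted to each [a_k, a_{k+1}) is continuous, strictly increasing, vanishes at a_k and maps the node onto [0,1)). Then for all x_2,…,x_n ∈ [0,1) and every k ∈ {0,…,2^{h_n} − 1}, the set (⋂_{i=2}^{n} (T_s^{h_i})^{−1}([0, x_i])) ∩ [a_k, a_{k+1}) is either empty or an interval containing its left endpoint a_k (i.e., of the form [a_k, b_k] or [a_k, b_k) for some b_k ∈ [a_k, a_{k+1}]). In particular, the intersection ⋂_{i=2}^{n} (T_s^{h_i})^{−1}([0, x_i]) is a union of at most 2^{h_n} pairwise disjoint intervals, each anchored at a node of T_s^{h_n}. -/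
open Set

/-- The Manneville–Pomeau transformation `T_s(x) = x + x^(1+s) (mod 1)`. -/
noncomputable def MP (s : ℝ) (x : ℝ) : ℝ :=
  if x + x ^ (1 + s) < 1 then x + x ^ (1 + s) else x + x ^ (1 + s) - 1

namespace MPaux

variable {s : ℝ}

lemma g_cont (hs : 0 < s) : Continuous (fun x : ℝ => x + x ^ (1 + s)) := by
  refine continuous_id.add ?_
  refine continuous_iff_continuousAt.2 fun x => ?_
  exact Real.continuousAt_rpow_const x (1 + s) (Or.inr (by linarith))

lemma g_mono (hs : 0 < s) {x y : ℝ} (hx : 0 ≤ x) (hxy : x ≤ y) :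
    x + x ^ (1 + s) ≤ y + y ^ (1 + s) :=
  add_le_add hxy (Real.rpow_le_rpow hx hxy (by linarith))

lemma g_strict (hs : 0 < s) {x y : ℝ} (hx : 0 ≤ x) (hxy : x < y) :
    x + x ^ (1 + s) < y + y ^ (1 + s) :=
  add_lt_add hxy (Real.rpow_lt_rpow hx hxy (by linarith))

lemma MP_mem (hs : 0 < s) {x : ℝ} (hx : x ∈ Ico (0:ℝ) 1) : MP s x ∈ Ico (0:ℝ) 1 := by
  have h0 : (0:ℝ) ≤ x ^ (1 + s) := Real.rpow_nonneg hx.1 _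
  have h1 : x ^ (1 + s) < 1 := Real.rpow_lt_one hx.1 hx.2 (by linarith)
  have hx0 := hx.1
  have hx1 := hx.2
  unfold MP
  split_ifs with hc
  · exact ⟨by linarith, hc⟩
  · push_neg at hc
    exact ⟨by linarith, by linarith⟩

lemma MP_zero (hs : 0 < s) : MP s 0 = 0 := by
  have h0 : (0:ℝ) ^ (1 + s) = 0 := Real.zero_rpow (by positivity : (0:ℝ) < 1 + s).ne'
  simp [MP, h0]

lemma iter_mem (hs : 0 < s) (m : ℕ) {x : ℝ} (hx : x ∈ Ico (0:ℝ) 1) :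
    (MP s)^[m] x ∈ Ico (0:ℝ) 1 := by
  induction m generalizing x with
  | zero => simpa using hx
  | succ m ih => rw [Function.iterate_succ_apply]; exact ih (MP_mem hs hx)

lemma iter_zero (hs : 0 < s) (m : ℕ) : (MP s)^[m] 0 = 0 :=
  Function.iterate_fixed (MP_zero hs) m

lemma no_straddle (hs : 0 < s) (m : ℕ) (I : Set ℝ) (hOC : I.OrdConnected)
    (hI : I ⊆ Ico (0:ℝ) 1) (hmono : StrictMonoOn ((MP s)^[m+1]) I)
    {p q : ℝ} (hp : p ∈ I) (hq : q ∈ I) (hgp : p + p ^ (1 + s) < 1)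
    (hgq : 1 ≤ q + q ^ (1 + s)) : False := by
  have hpq : p ≤ q := by
    by_contra hc; push_neg at hc
    have := g_strict hs (hI hq).1 hc
    linarith
  have h1 : (1:ℝ) ∈ Icc (p + p ^ (1 + s)) (q + q ^ (1 + s)) := ⟨le_of_lt hgp, hgq⟩
  obtain ⟨c, hc, hgc⟩ := intermediate_value_Icc hpq ((g_cont hs)).continuousOn h1
  have hgc' : c + c ^ (1 + s) = 1 := hgc
  have hcI : c ∈ I := hOC.out hp hq hc
  have hfc : MP s c = 0 := by
    unfold MP
    rw [hgc']
    norm_num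
  have hpc : p < c := by
    by_contra hcp; push_neg at hcp
    have := g_mono hs (hI hcI).1 hcp
    linarith [hgc']
  have h2 : (MP s)^[m+1] c = 0 := by
    rw [Function.iterate_succ_apply, hfc, iter_zero hs]
  have h3 := hmono hp hcI hpc
  have h4 := (iter_mem hs (m+1) (hI hp)).1
  rw [h2] at h3
  linarith

lemma branch_facts (hs : 0 < s) (I : Set ℝ) (hOC : I.OrdConnected) (hI : I ⊆ Ico (0:ℝ) 1)
    (e : ℝ) (heq : ∀ t ∈ I, MP s t = t + t ^ (1 + s) - e) :
    StrictMonoOn (MP s) I ∧ (MP s '' I).OrdConnected := by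
  constructor
  · intro p hp q hq hpq
    rw [heq p hp, heq q hq]
    have := g_strict hs (hI hp).1 hpq
    linarith
  · constructor
    rintro u ⟨p, hp, rfl⟩ v ⟨q, hq, rfl⟩ z hz
    rw [heq p hp, heq q hq] at hz
    have h1 : p + p ^ (1 + s) ≤ q + q ^ (1 + s) := by
      have := hz.1; have := hz.2; linarith
    have hpq : p ≤ q := by
      by_contra hc; push_neg at hc
      have := g_strict hs (hI hq).1 hc
      linarith
    have hz' : z + e ∈ Icc (p + p ^ (1 + s)) (q + q ^ (1 + s)) :=
      ⟨by linarith [hz.1], by linarith [hz.2]⟩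
    obtain ⟨w, hw, hgw⟩ := intermediate_value_Icc hpq ((g_cont hs)).continuousOn hz'
    have hgw' : w + w ^ (1 + s) = z + e := hgw
    have hwI : w ∈ I := hOC.out hp hq hw
    exact ⟨w, hwI, by rw [heq w hwI, hgw']; ring⟩

lemma iter_strictMonoOn (hs : 0 < s) :
    ∀ (m : ℕ) (I : Set ℝ), I.OrdConnected → I ⊆ Ico (0:ℝ) 1 →
      StrictMonoOn ((MP s)^[m]) I → ∀ j, j ≤ m → StrictMonoOn ((MP s)^[j]) I := by
  intro m
  induction m with
  | zero =>
      intro I _ _ hI j hj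
      obtain rfl : j = 0 := Nat.le_zero.1 hj
      exact hI
  | succ m ih =>
      intro I hOC hI01 hmono j hj
      have hbr : ∃ e : ℝ, ∀ t ∈ I, MP s t = t + t ^ (1 + s) - e := by
        by_cases hA : ∀ t ∈ I, t + t ^ (1 + s) < 1
        · exact ⟨0, fun t ht => by rw [sub_zero]; exact if_pos (hA t ht)⟩
        · push_neg at hA
          obtain ⟨q, hqI, hq⟩ := hA
          refine ⟨1, fun t ht => ?_⟩
          have h1t : ¬ (t + t ^ (1 + s) < 1) := fun hc =>
            no_straddle hs m I hOC hI01 hmono ht hqI hc hq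
          exact if_neg h1t
      obtain ⟨e, heq⟩ := hbr
      obtain ⟨hfmono, hJOC⟩ := branch_facts hs I hOC hI01 e heq
      have hJ01 : MP s '' I ⊆ Ico (0:ℝ) 1 := by
        rintro _ ⟨t, ht, rfl⟩; exact MP_mem hs (hI01 ht)
      have hmonoJ : StrictMonoOn ((MP s)^[m]) (MP s '' I) := by
        rintro _ ⟨p, hp, rfl⟩ _ ⟨q, hq, rfl⟩ huv
        have hpq : p < q := by
          by_contra hc; push_neg at hc
          rcases hc.lt_or_eq with hlt | heqq
          · have := hfmono hq hp hlt; linarith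
          · rw [heqq] at huv; exact lt_irrefl _ huv
        have h2 := hmono hp hq hpq
        rw [Function.iterate_succ_apply, Function.iterate_succ_apply] at h2
        exact h2
      have IHJ := ih (MP s '' I) hJOC hJ01 hmonoJ
      cases j with
      | zero => intro p hp q hq hpq; simpa using hpq
      | succ j =>
          intro p hp q hq hpq
          rw [Function.iterate_succ_apply, Function.iterate_succ_apply]
          exact IHJ j (Nat.succ_le_succ_iff.1 hj)
            (mem_image_of_mem _ hp) (mem_image_of_mem _ hq) (hfmono hp hq hpq)

end MPaux

theorem intersection_of_iterate_preimages_anchored_at_nodes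
    (s : ℝ) (hs : 0 < s) (n : ℕ) (hn : 2 ≤ n) (h : ℕ → ℕ)
    (hh2 : 2 ≤ h 2) (hhmono : ∀ i, 2 ≤ i → i < n → h i < h (i + 1))
    (a : ℕ → ℝ) (ha0 : a 0 = 0) (haN : a (2 ^ h n) = 1)
    (hamono : StrictMonoOn a (Set.Iic (2 ^ h n)))
    (hbranch : ∀ k < 2 ^ h n,
      ContinuousOn ((MP s)^[h n]) (Ico (a k) (a (k + 1))) ∧
      StrictMonoOn ((MP s)^[h n]) (Ico (a k) (a (k + 1))) ∧
      (MP s)^[h n] (a k) = 0 ∧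
      (MP s)^[h n] '' Ico (a k) (a (k + 1)) = Ico (0 : ℝ) 1)
    (x : ℕ → ℝ) (hx : ∀ i ∈ Finset.Icc 2 n, x i ∈ Ico (0 : ℝ) 1) :
    ∀ k < 2 ^ h n,
      (⋂ i ∈ Finset.Icc 2 n, ((MP s)^[h i]) ⁻¹' Icc 0 (x i)) ∩
          Ico (a k) (a (k + 1)) = ∅ ∨
      ∃ b ∈ Icc (a k) (a (k + 1)),
        ((⋂ i ∈ Finset.Icc 2 n, ((MP s)^[h i]) ⁻¹' Icc 0 (x i)) ∩
            Ico (a k) (a (k + 1)) = Icc (a k) b) ∨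
        ((⋂ i ∈ Finset.Icc 2 n, ((MP s)^[h i]) ⁻¹' Icc 0 (x i)) ∩
            Ico (a k) (a (k + 1)) = Ico (a k) b) := by
  intro k hk
  have hk1 : k + 1 ≤ 2 ^ h n := hk
  have hak : a k < a (k + 1) :=
    hamono (Set.mem_Iic.2 (le_of_lt hk)) (Set.mem_Iic.2 hk1) (Nat.lt_succ_self k)
  have haknn : (0:ℝ) ≤ a k := by
    rcases Nat.eq_zero_or_pos k with rfl | hk0
    · rw [ha0]
    · have := hamono (Set.mem_Iic.2 (Nat.zero_le _)) (Set.mem_Iic.2 (le_of_lt hk)) hk0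
      rw [ha0] at this; exact le_of_lt this
  have hak1 : a (k + 1) ≤ 1 := by
    rcases eq_or_lt_of_le hk1 with heq | hlt
    · rw [heq, haN]
    · have := hamono (Set.mem_Iic.2 hk1) (Set.mem_Iic.2 le_rfl) hlt
      rw [haN] at this; exact le_of_lt this
  set I := Ico (a k) (a (k + 1)) with hIdef
  have hI01 : I ⊆ Ico (0:ℝ) 1 := fun t ht =>
    ⟨le_trans haknn ht.1, lt_of_lt_of_le ht.2 hak1⟩
  obtain ⟨hcont, hmono, hzero, himg⟩ := hbranch k hk
  have HM := MPaux.iter_strictMonoOn hs (h n) I Set.ordConnected_Ico hI01 hmono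
  have hstep : ∀ d j, 2 ≤ j → j + d ≤ n → h j ≤ h (j + d) := by
    intro d
    induction d with
    | zero => intro j _ _; simp
    | succ d ihd =>
        intro j h2 hjd
        have e1 : h j ≤ h (j + d) := ihd j h2 (by omega)
        have e2 : h (j + d) < h (j + d + 1) := hhmono (j + d) (by omega) (by omega)
        have e3 : j + (d + 1) = j + d + 1 := by omega
        rw [e3]; omega
  have hle : ∀ i ∈ Finset.Icc 2 n, h i ≤ h n := by
    intro i hi
    obtain ⟨h2i, hin⟩ := Finset.mem_Icc.1 hi
    have := hstep (n - i) i h2i (by omega)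
    rwa [Nat.add_sub_cancel' hin] at this
  set S := ⋂ i ∈ Finset.Icc 2 n, ((MP s)^[h i]) ⁻¹' Icc 0 (x i) with hSdef
  have hdc : ∀ y ∈ I, ∀ z ∈ S ∩ I, y ≤ z → y ∈ S ∩ I := by
    intro y hy z hz hyz
    refine ⟨?_, hy⟩
    rw [hSdef, Set.mem_iInter₂]
    intro i hi
    have hzS : (MP s)^[h i] z ∈ Icc 0 (x i) := by
      have := Set.mem_iInter₂.1 (hSdef ▸ hz.1) i hi
      exact this
    have hmi := (HM (h i) (hle i hi)).monotoneOn
    refine Set.mem_preimage.2 ⟨(MPaux.iter_mem hs (h i) (hI01 hy)).1, ?_⟩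
    exact le_trans (hmi hy hz.2 hyz) hzS.2
  by_cases hemp : S ∩ I = ∅
  · exact Or.inl hemp
  · right
    obtain ⟨z0, hz0⟩ := Set.nonempty_iff_ne_empty.2 hemp
    have hbdd : BddAbove (S ∩ I) := ⟨a (k + 1), fun t ht => le_of_lt ht.2.2⟩
    have hne : (S ∩ I).Nonempty := ⟨z0, hz0⟩
    have hakT : a k ∈ S ∩ I := hdc (a k) (Set.left_mem_Ico.2 hak) z0 hz0 hz0.2.1
    set b := sSup (S ∩ I) with hbdef
    have hab : a k ≤ b := le_csSup hbdd hakT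
    have hba : b ≤ a (k + 1) := csSup_le hne fun t ht => le_of_lt ht.2.2
    refine ⟨b, ⟨hab, hba⟩, ?_⟩
    by_cases hbT : b ∈ S ∩ I
    · left
      ext t
      constructor
      · intro ht; exact ⟨ht.2.1, le_csSup hbdd ht⟩
      · intro ht
        exact hdc t ⟨ht.1, lt_of_le_of_lt ht.2 hbT.2.2⟩ b hbT ht.2
    · right
      ext t
      constructor
      · intro ht
        refine ⟨ht.2.1, lt_of_le_of_ne (le_csSup hbdd ht) ?_⟩
        rintro rfl; exact hbT ht
      · intro ht
        obtain ⟨z, hzT, htz⟩ := exists_lt_of_lt_csSup hne ht.2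
        exact hdc t ⟨ht.1, lt_trans htz hzT.2.2⟩ z hzT (le_of_lt htz)
end

section
/- Let (μ_n)_{n≥1} be probability measures on [0,1] converging weakly to a probability measure μ that is absolutely continuous with respect to Lebesgue measure. Let f_n : [0,1] → [0,1] be continuous functions converging uniformly to a continuous function f : [0,1] → [0,1]; let (a_m)_{m≥1} ⊆ [0,1] with a_m → a; and let g_m : [0,1] → [0,1] be continuous functions converging uniformly to a continuous function g : [0,1] → [0,1]. Then for every ε > 0 there exists N such that for all m, n ≥ N and all v ∈ [0,1], |μ_n([a_m, g_m(f_n(v))]) − μ([a, g(f(v))])| < ε; that is, μ_n([a_m, g_m(f_n(v))]) converges to μ([a, g(f(v))]) uniformly in v as m, n → ∞ (and the two iterated limits in m and n also exist and equal this common limit). -/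
open Set Filter MeasureTheory Topology

namespace UCIMaux

noncomputable def F (ν : Measure ℝ) (x : ℝ) : ℝ := (ν (Iic x)).toReal

lemma F_mono (ν : Measure ℝ) [IsFiniteMeasure ν] : Monotone (F ν) := fun _ _ h =>
  ENNReal.toReal_mono (measure_ne_top ν _) (measure_mono (Iic_subset_Iic.2 h))

lemma F_Ioc (ν : Measure ℝ) [IsFiniteMeasure ν] (c d : ℝ) :
    (ν (Ioc c d)).toReal = F ν (max c d) - F ν c := by
  rcases le_total d c with h | h
  · rw [Ioc_eq_empty (not_lt.2 h), max_eq_left h]; simp [F]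
  · rw [max_eq_right h]
    have hu : Iic d = Iic c ∪ Ioc c d := (Iic_union_Ioc_eq_Iic h).symm
    have hd : ν (Iic d) = ν (Iic c) + ν (Ioc c d) := by
      rw [hu, measure_union (Iic_disjoint_Ioc le_rfl) measurableSet_Ioc]
    rw [F, F, hd, ENNReal.toReal_add (measure_ne_top _ _) (measure_ne_top _ _)]
    ring

lemma F_Ioc' (ν : Measure ℝ) [IsFiniteMeasure ν] {c d : ℝ} (h : c ≤ d) :
    (ν (Ioc c d)).toReal = F ν d - F ν c := by
  rw [F_Ioc, max_eq_right h]

lemma measure_Icc_eq_Ioc (ν : Measure ℝ) {c : ℝ} (d : ℝ) (h : ν {c} = 0) :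
    ν (Icc c d) = ν (Ioc c d) := by
  refine le_antisymm ?_ (measure_mono Ioc_subset_Icc_self)
  calc ν (Icc c d) ≤ ν ({c} ∪ Ioc c d) := by
        refine measure_mono (fun x hx => ?_)
        rcases eq_or_lt_of_le hx.1 with h' | h'
        · exact Or.inl h'.symm
        · exact Or.inr ⟨h', hx.2⟩
    _ ≤ ν {c} + ν (Ioc c d) := measure_union_le _ _
    _ = ν (Ioc c d) := by rw [h, zero_add]

lemma F_cont (ν : Measure ℝ) [IsFiniteMeasure ν] [NullSingletonClass ν] : Continuous (F ν) := by
  rw [continuous_iff_continuousAt]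
  intro x
  have h2 : Tendsto (fun y : ℝ => |y - x|) (𝓝 x) (𝓝 0) := by
    have : Tendsto (fun y : ℝ => y - x) (𝓝 x) (𝓝 (x - x)) :=
      tendsto_id.sub tendsto_const_nhds
    rw [sub_self] at this
    simpa using this.abs
  have h3 := (tendsto_measure_Icc ν x).comp h2
  have h1 : Tendsto (fun y => (ν (Icc (x - |y - x|) (x + |y - x|))).toReal) (𝓝 x) (𝓝 0) := by
    have := (ENNReal.tendsto_toReal ENNReal.zero_ne_top).comp h3
    simpa only [ENNReal.toReal_zero, Function.comp_def] using this
  have key : Tendsto (fun y => |F ν y - F ν x|) (𝓝 x) (𝓝 0) := by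
    refine squeeze_zero (fun y => abs_nonneg _) (fun y => ?_) h1
    rcases le_total x y with h | h
    · rw [abs_of_nonneg (sub_nonneg.2 (F_mono ν h))]
      have he : F ν y - F ν x = (ν (Ioc x y)).toReal := by
        rw [F_Ioc ν x y, max_eq_right h]
      rw [he]
      refine ENNReal.toReal_mono (measure_ne_top _ _) (measure_mono (fun z hz => ?_))
      have : |y - x| = y - x := abs_of_nonneg (by linarith)
      constructor <;> rw [this] <;> [linarith [hz.1]; linarith [hz.2]]
    · rw [abs_of_nonpos (sub_nonpos.2 (F_mono ν h)), neg_sub]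
      have he : F ν x - F ν y = (ν (Ioc y x)).toReal := by
        rw [F_Ioc ν y x, max_eq_right h]
      rw [he]
      refine ENNReal.toReal_mono (measure_ne_top _ _) (measure_mono (fun z hz => ?_))
      have : |y - x| = x - y := by rw [abs_sub_comm]; exact abs_of_nonneg (by linarith)
      constructor <;> rw [this] <;> [linarith [hz.1]; linarith [hz.2]]
  rw [ContinuousAt, tendsto_iff_dist_tendsto_zero]
  simpa [Real.dist_eq] using key

lemma F_zero (ν : Measure ℝ) [IsProbabilityMeasure ν] (hs : ν (Icc 0 1) = 1) {x : ℝ}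
    (hx : x < 0) : F ν x = 0 := by
  have hc : ν ((Icc (0:ℝ) 1)ᶜ) = 0 := by
    rw [measure_compl measurableSet_Icc (measure_ne_top _ _), hs, measure_univ, tsub_self]
  have h0 : ν (Iic x) = 0 := by
    refine measure_mono_null (fun z hz => ?_) hc
    intro hz'
    have h1 : (0:ℝ) ≤ z := hz'.1
    have h2 : z ≤ x := hz
    linarith
  simp [F, h0]

lemma F_one (ν : Measure ℝ) [IsProbabilityMeasure ν] (hs : ν (Icc 0 1) = 1) {x : ℝ}
    (hx : (1:ℝ) ≤ x) : F ν x = 1 := by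
  have h1 : ν (Iic x) = 1 := by
    refine le_antisymm (le_trans (measure_mono (subset_univ _)) (le_of_eq measure_univ)) ?_
    rw [← hs]
    exact measure_mono (fun z hz => le_trans hz.2 hx)
  simp [F, h1]

lemma polya (μseq : ℕ → Measure ℝ) (μ : Measure ℝ)
    [∀ n, IsProbabilityMeasure (μseq n)] [IsProbabilityMeasure μ]
    (hsupp : ∀ n, μseq n (Icc (0 : ℝ) 1) = 1) (hsuppμ : μ (Icc (0 : ℝ) 1) = 1)
    (hpt : ∀ x : ℝ, Tendsto (fun n => F (μseq n) x) atTop (𝓝 (F μ x)))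
    (hmod : ∀ ε' > (0:ℝ), ∃ δ > (0:ℝ), δ ≤ 1 ∧ ∀ x ∈ Icc (-1:ℝ) 2, ∀ y ∈ Icc (-1:ℝ) 2,
      |x - y| ≤ δ → |F μ x - F μ y| < ε') :
    ∀ ε > 0, ∃ N : ℕ, ∀ n ≥ N, ∀ x : ℝ, |F (μseq n) x - F μ x| < ε := by
  intro ε hε
  obtain ⟨δ, hδ0, hδ1, hδ⟩ := hmod (ε/2) (by linarith)
  set K : ℕ := ⌈(3:ℝ)/δ⌉₊ with hK
  set t : ℕ → ℝ := fun i => -1 + i * δ with ht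
  have hNi : ∀ i : ℕ, ∃ N, ∀ n ≥ N, |F (μseq n) (t i) - F μ (t i)| < ε/2 := by
    intro i
    obtain ⟨N, hN⟩ := Metric.tendsto_atTop.1 (hpt (t i)) (ε/2) (by linarith)
    exact ⟨N, fun n hn => by simpa [Real.dist_eq] using hN n hn⟩
  choose Ns hNs using hNi
  refine ⟨(Finset.range (K+1)).sup Ns, fun n hn x => ?_⟩
  have hn' : ∀ i ≤ K, |F (μseq n) (t i) - F μ (t i)| < ε/2 := fun i hi =>
    hNs i n (le_trans (Finset.le_sup (Finset.mem_range.2 (Nat.lt_succ_of_le hi))) hn)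
  rcases lt_or_ge x 0 with hx0 | hx0
  · rw [F_zero (μseq n) (hsupp n) hx0, F_zero μ hsuppμ hx0]
    simpa using hε
  rcases le_or_gt 1 x with hx1 | hx1
  · rw [F_one (μseq n) (hsupp n) hx1, F_one μ hsuppμ hx1]
    simpa using hε
  set i : ℕ := ⌊(x+1)/δ⌋₊ with hi
  have hi1 : (i:ℝ) * δ ≤ x + 1 := by
    have := Nat.floor_le (show (0:ℝ) ≤ (x+1)/δ by positivity)
    calc (i:ℝ) * δ ≤ ((x+1)/δ) * δ := by
          exact mul_le_mul_of_nonneg_right this (le_of_lt hδ0)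
      _ = x + 1 := by field_simp
  have hi2 : x + 1 < ((i:ℝ) + 1) * δ := by
    have h := Nat.lt_floor_add_one ((x+1)/δ)
    calc x + 1 = ((x+1)/δ) * δ := by field_simp
      _ < ((i:ℝ) + 1) * δ := by
          exact mul_lt_mul_of_pos_right (by exact_mod_cast h) hδ0
  have h3 : (3:ℝ) ≤ (K:ℝ) * δ := by
    have := Nat.le_ceil ((3:ℝ)/δ)
    rw [hK]
    exact (div_le_iff₀ hδ0).1 this
  have hiKR : (i:ℝ) < (K:ℝ) := by
    have hlt : (i:ℝ) * δ < (K:ℝ) * δ := by linarith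
    exact lt_of_mul_lt_mul_right hlt (le_of_lt hδ0)
  have hiK : i + 1 ≤ K := by
    have : i < K := by exact_mod_cast hiKR
    omega
  have hti : t i ≤ x := by simp only [ht]; linarith
  have ht1 : t (i+1) = t i + δ := by simp only [ht]; push_cast; ring
  have hti1 : x < t (i+1) := by
    rw [ht1]; simp only [ht]; push_cast at hi2 ⊢; linarith
  have htnn : (0:ℝ) ≤ (i:ℝ) * δ := mul_nonneg (Nat.cast_nonneg i) (le_of_lt hδ0)
  have htmem : t i ∈ Icc (-1:ℝ) 2 := by
    constructor
    · simp only [ht]; linarith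
    · linarith
  have ht1mem : t (i+1) ∈ Icc (-1:ℝ) 2 := by
    rw [ht1]
    constructor
    · simp only [ht]; linarith
    · linarith
  have hxmem : x ∈ Icc (-1:ℝ) 2 := ⟨by linarith, by linarith⟩
  have hd1 : |t (i+1) - x| ≤ δ := by
    rw [abs_le]; constructor
    · linarith
    · rw [ht1]; linarith
  have hd2 : |t i - x| ≤ δ := by
    rw [abs_le]
    have := hti1
    rw [ht1] at this
    constructor <;> linarith
  have u1 : F (μseq n) x ≤ F (μseq n) (t (i+1)) := F_mono (μseq n) (le_of_lt hti1)
  have u2 : F (μseq n) (t i) ≤ F (μseq n) x := F_mono (μseq n) hti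
  have p1 := hn' (i+1) hiK
  have p2 := hn' i (le_trans (Nat.le_succ i) hiK)
  have m1 := hδ (t (i+1)) ht1mem x hxmem hd1
  have m2 := hδ (t i) htmem x hxmem hd2
  rw [abs_lt] at p1 p2 m1 m2 ⊢
  constructor <;> [linarith [p2.1, m2.1, u2]; linarith [p1.2, m1.2, u1]]

end UCIMaux


open UCIMaux in
theorem uniform_convergence_of_interval_measures
    (μseq : ℕ → Measure ℝ) (μ : Measure ℝ)
    [∀ n, IsProbabilityMeasure (μseq n)] [IsProbabilityMeasure μ]
    (hsupp : ∀ n, μseq n (Icc (0 : ℝ) 1) = 1) (hsuppμ : μ (Icc (0 : ℝ) 1) = 1)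
    (hac : μ ≪ volume)
    (hweak : ∀ φ : BoundedContinuousFunction ℝ ℝ,
      Tendsto (fun n => ∫ x, φ x ∂(μseq n)) atTop (nhds (∫ x, φ x ∂μ)))
    (f : ℕ → ℝ → ℝ) (f₀ : ℝ → ℝ)
    (hfc : ∀ n, ContinuousOn (f n) (Icc 0 1))
    (hfmaps : ∀ n, Set.MapsTo (f n) (Icc (0 : ℝ) 1) (Icc (0 : ℝ) 1))
    (hf₀c : ContinuousOn f₀ (Icc 0 1))
    (hf₀maps : Set.MapsTo f₀ (Icc (0 : ℝ) 1) (Icc (0 : ℝ) 1))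
    (hfconv : TendstoUniformlyOn f f₀ atTop (Icc 0 1))
    (aseq : ℕ → ℝ) (a : ℝ) (haseq : ∀ m, aseq m ∈ Icc (0 : ℝ) 1)
    (ha : Tendsto aseq atTop (nhds a))
    (g : ℕ → ℝ → ℝ) (g₀ : ℝ → ℝ)
    (hgc : ∀ m, ContinuousOn (g m) (Icc 0 1))
    (hgmaps : ∀ m, Set.MapsTo (g m) (Icc (0 : ℝ) 1) (Icc (0 : ℝ) 1))
    (hg₀c : ContinuousOn g₀ (Icc 0 1))
    (hg₀maps : Set.MapsTo g₀ (Icc (0 : ℝ) 1) (Icc (0 : ℝ) 1))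
    (hgconv : TendstoUniformlyOn g g₀ atTop (Icc 0 1)) :
    ∀ ε > 0, ∃ N : ℕ, ∀ m ≥ N, ∀ n ≥ N, ∀ v ∈ Icc (0 : ℝ) 1,
      |((μseq n) (Icc (aseq m) (g m (f n v)))).toReal -
        (μ (Icc a (g₀ (f₀ v)))).toReal| < ε := by
  classical
  intro ε hε
  haveI : NullSingletonClass μ := ⟨fun x => hac (measure_singleton x)⟩
  -- uniform continuity modulus for F μ on [-1, 2]
  have hmod : ∀ ε' > (0:ℝ), ∃ δ > (0:ℝ), δ ≤ 1 ∧ ∀ x ∈ Icc (-1:ℝ) 2, ∀ y ∈ Icc (-1:ℝ) 2,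
      |x - y| ≤ δ → |UCIMaux.F μ x - UCIMaux.F μ y| < ε' := by
    intro ε' hε'
    have huc : UniformContinuousOn (UCIMaux.F μ) (Icc (-1:ℝ) 2) :=
      isCompact_Icc.uniformContinuousOn_of_continuous (UCIMaux.F_cont μ).continuousOn
    obtain ⟨δ, hδ0, hδ⟩ := Metric.uniformContinuousOn_iff.1 huc ε' hε'
    refine ⟨min (δ/2) 1, by positivity, min_le_right _ _, fun x hx y hy hxy => ?_⟩
    have hlt : dist x y < δ := by
      rw [Real.dist_eq]
      have h1 := min_le_left (δ/2) 1
      linarith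
    have := hδ x hx y hy hlt
    rwa [Real.dist_eq] at this
  -- pointwise convergence of CDFs
  have hpt : ∀ x : ℝ, Tendsto (fun n => UCIMaux.F (μseq n) x) atTop (𝓝 (UCIMaux.F μ x)) := by
    intro x
    have hP := (ProbabilityMeasure.tendsto_iff_forall_integral_tendsto
      (μs := fun k => (⟨μseq k, inferInstance⟩ : ProbabilityMeasure ℝ))
      (μ := ⟨μ, inferInstance⟩) (F := atTop)).mpr (fun φ => hweak φ)
    have h := ProbabilityMeasure.tendsto_measure_of_null_frontier_of_tendsto' hP
      (E := Iic x) (by rw [frontier_Iic]; exact hac (measure_singleton x))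
    exact (ENNReal.tendsto_toReal (measure_ne_top μ _)).comp h
  -- Polya uniform convergence
  obtain ⟨N₁, hN₁⟩ := UCIMaux.polya μseq μ hsupp hsuppμ hpt hmod (ε/8) (by linarith)
  -- modulus with ε/8
  obtain ⟨δ₁, hδ₁0, hδ₁1, hδ₁⟩ := hmod (ε/8) (by linarith)
  set δ : ℝ := δ₁/2 with hδdef
  have hδ0 : 0 < δ := by positivity
  -- composition uniform closeness
  have hcomp : ∃ N₂ : ℕ, ∀ m ≥ N₂, ∀ n ≥ N₂, ∀ v ∈ Icc (0:ℝ) 1,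
      |g m (f n v) - g₀ (f₀ v)| ≤ δ := by
    have hgu : UniformContinuousOn g₀ (Icc 0 1) :=
      isCompact_Icc.uniformContinuousOn_of_continuous hg₀c
    obtain ⟨δ', hδ'0, hδ'⟩ := Metric.uniformContinuousOn_iff.1 hgu (δ/2) (by positivity)
    obtain ⟨Nf, hNf⟩ := eventually_atTop.1 (Metric.tendstoUniformlyOn_iff.1 hfconv δ' hδ'0)
    obtain ⟨Ng, hNg⟩ := eventually_atTop.1
      (Metric.tendstoUniformlyOn_iff.1 hgconv (δ/2) (by positivity))
    refine ⟨max Nf Ng, fun m hm n hn v hv => ?_⟩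
    have hfv : f n v ∈ Icc (0:ℝ) 1 := hfmaps n hv
    have h1 : |g m (f n v) - g₀ (f n v)| < δ/2 := by
      have := hNg m (le_trans (le_max_right _ _) hm) (f n v) hfv
      rw [Real.dist_eq, abs_sub_comm] at this
      exact this
    have h2 : |g₀ (f n v) - g₀ (f₀ v)| < δ/2 := by
      have hd : dist (f n v) (f₀ v) < δ' := by
        have := hNf n (le_trans (le_max_left _ _) hn) v hv
        rwa [dist_comm] at this
      have := hδ' (f n v) hfv (f₀ v) (hf₀maps hv) hd
      rwa [Real.dist_eq] at this
    calc |g m (f n v) - g₀ (f₀ v)|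
        ≤ |g m (f n v) - g₀ (f n v)| + |g₀ (f n v) - g₀ (f₀ v)| := abs_sub_le _ _ _
      _ ≤ δ := by linarith
  obtain ⟨N₂, hN₂⟩ := hcomp
  obtain ⟨N₃, hN₃⟩ := Metric.tendsto_atTop.1 ha δ hδ0
  have hamem : a ∈ Icc (0:ℝ) 1 := isClosed_Icc.mem_of_tendsto ha (Eventually.of_forall haseq)
  refine ⟨max N₁ (max N₂ N₃), fun m hm n hn v hv => ?_⟩
  have hmN₁ : N₁ ≤ n := le_trans (le_max_left _ _) hn
  have hmN₂m : N₂ ≤ m := le_trans (le_trans (le_max_left _ _) (le_max_right _ _)) hm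
  have hmN₂n : N₂ ≤ n := le_trans (le_trans (le_max_left _ _) (le_max_right _ _)) hn
  have hmN₃ : N₃ ≤ m := le_trans (le_trans (le_max_right _ _) (le_max_right _ _)) hm
  set c : ℝ := aseq m with hcdef
  set c' : ℝ := a with hc'def
  set d : ℝ := g m (f n v) with hddef
  set d' : ℝ := g₀ (f₀ v) with hd'def
  have hc : c ∈ Icc (0:ℝ) 1 := haseq m
  have hd : d ∈ Icc (0:ℝ) 1 := hgmaps m (hfmaps n hv)
  have hd' : d' ∈ Icc (0:ℝ) 1 := hg₀maps (hf₀maps hv)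
  have hcc' : |c - c'| ≤ δ := by
    have := hN₃ m hmN₃
    rw [Real.dist_eq] at this
    exact le_of_lt this
  have hdd' : |d - d'| ≤ δ := hN₂ m hmN₂m n hmN₂n v hv
  -- notation
  set Fn : ℝ → ℝ := UCIMaux.F (μseq n) with hFndef
  set Fm : ℝ → ℝ := UCIMaux.F μ with hFmdef
  -- B identity
  have hB : (μ (Icc c' d')).toReal = Fm (max c' d') - Fm c' := by
    rw [UCIMaux.measure_Icc_eq_Ioc μ d' (measure_singleton c'), UCIMaux.F_Ioc]
  -- lower bound for A
  have hlow : Fn (max c d) - Fn c ≤ ((μseq n) (Icc c d)).toReal := by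
    rw [← UCIMaux.F_Ioc]
    exact ENNReal.toReal_mono (measure_ne_top _ _) (measure_mono Ioc_subset_Icc_self)
  -- upper bound for A
  have hup : ((μseq n) (Icc c d)).toReal ≤ Fn (max (c - δ) d) - Fn (c - δ) := by
    rw [← UCIMaux.F_Ioc' (μseq n) (le_max_left (c - δ) d)]
    refine ENNReal.toReal_mono (measure_ne_top _ _) (measure_mono (fun z hz => ?_))
    exact ⟨by linarith [hz.1], le_trans hz.2 (le_max_right _ _)⟩
  -- membership in [-1,2]
  have hmem1 : max c d ∈ Icc (-1:ℝ) 2 := ⟨by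
      have := le_max_left c d; linarith [hc.1], max_le (by linarith [hc.2]) (by linarith [hd.2])⟩
  have hmem2 : c ∈ Icc (-1:ℝ) 2 := ⟨by linarith [hc.1], by linarith [hc.2]⟩
  have hmem3 : max (c - δ) d ∈ Icc (-1:ℝ) 2 := ⟨by
      have := le_max_right (c - δ) d; linarith [hd.1],
      max_le (by linarith [hc.2, hδ0]) (by linarith [hd.2])⟩
  have hmem4 : c - δ ∈ Icc (-1:ℝ) 2 := ⟨by linarith [hc.1, hδ₁1], by linarith [hc.2, hδ0]⟩
  have hmem5 : max c' d' ∈ Icc (-1:ℝ) 2 := ⟨by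
      have := le_max_left c' d'; linarith [hamem.1],
      max_le (by linarith [hamem.2]) (by linarith [hd'.2])⟩
  have hmem6 : c' ∈ Icc (-1:ℝ) 2 := ⟨by linarith [hamem.1], by linarith [hamem.2]⟩
  -- modulus estimates
  have hmax1 : |max c d - max c' d'| ≤ δ₁ :=
    le_trans (abs_max_sub_max_le_max _ _ _ _) (by
      apply max_le <;> [exact le_trans hcc' (by linarith); exact le_trans hdd' (by linarith)])
  have hmax2 : |c - c'| ≤ δ₁ := le_trans hcc' (by linarith)
  have hcmδ : |c - δ - c'| ≤ δ₁ := by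
    have h := abs_le.1 hcc'
    rw [abs_le]
    constructor <;> linarith
  have hmax3 : |max (c - δ) d - max c' d'| ≤ δ₁ :=
    le_trans (abs_max_sub_max_le_max _ _ _ _)
      (max_le hcmδ (le_trans hdd' (by linarith)))
  have e1 : |Fm (max c d) - Fm (max c' d')| < ε/8 := hδ₁ _ hmem1 _ hmem5 hmax1
  have e2 : |Fm c - Fm c'| < ε/8 := hδ₁ _ hmem2 _ hmem6 hmax2
  have e3 : |Fm (max (c - δ) d) - Fm (max c' d')| < ε/8 := hδ₁ _ hmem3 _ hmem5 hmax3
  have e4 : |Fm (c - δ) - Fm c'| < ε/8 := hδ₁ _ hmem4 _ hmem6 hcmδ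
  have q1 : |Fn (max c d) - Fm (max c d)| < ε/8 := hN₁ n hmN₁ _
  have q2 : |Fn c - Fm c| < ε/8 := hN₁ n hmN₁ _
  have q3 : |Fn (max (c - δ) d) - Fm (max (c - δ) d)| < ε/8 := hN₁ n hmN₁ _
  have q4 : |Fn (c - δ) - Fm (c - δ)| < ε/8 := hN₁ n hmN₁ _
  rw [hB, abs_lt]
  rw [abs_lt] at e1 e2 e3 e4 q1 q2 q3 q4
  constructor
  · linarith [hlow, q1.1, q2.2, e1.1, e2.2]
  · linarith [hup, q3.2, q4.1, e3.2, e4.1]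
end

section
/- Let (μ_n)_{n≥1} be probability measures on [0,1] converging weakly to a probability measure μ that is absolutely continuous with respect to Lebesgue measure. Let (a_m)_{m≥1} ⊆ [0,1] with a_m → a, and let g_{m,n} : [0,1]² → [0,1] be functions satisfying a_m ≤ g_{m,n}(u,v) for all u, v, m, n and converging, uniformly in (u,v), to a continuous function g : [0,1]² → [0,1] as m, n → ∞ (i.e., for every ε > 0 there is N such that |g_{m,n}(u,v) − g(u,v)| < ε for all m, n ≥ N and all (u,v)). Then μ_n([a_m, g_{m,n}(u,v)]) converges to μ([a, g(u,v)]) uniformly in (u,v) ∈ [0,1]² as m, n → ∞: for every ε > 0 there exists N such that for all m, n ≥ N and all (u,v) ∈ [0,1]², |μ_n([a_m, g_{m,n}(u,v)]) − μ([a, g(u,v)])| < ε. -/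
open Set Filter MeasureTheory

private lemma aux_split (ν : Measure ℝ) [IsFiniteMeasure ν] {s t : ℝ} (h : s ≤ t) :
    (ν (Icc s t)).toReal = (ν (Iic t)).toReal - (ν (Iio s)).toReal := by
  have hu : Iio s ∪ Icc s t = Iic t := Iio_union_Icc_eq_Iic h
  have hd : Disjoint (Iio s) (Icc s t) :=
    ((Set.Iio_disjoint_Ici le_rfl).mono_right Icc_subset_Ici_self)
  have hmu : ν (Iic t) = ν (Iio s) + ν (Icc s t) := by
    rw [← hu, measure_union hd measurableSet_Icc]
  rw [hmu, ENNReal.toReal_add (measure_ne_top _ _) (measure_ne_top _ _)]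
  ring

private lemma aux_grid {k : ℕ} (hk : 0 < k) {t : ℝ} (ht : t ∈ Set.Icc (-1:ℝ) 1) :
    ∃ i : ℕ, i < k ∧ -1 + 2*(i:ℝ)/k ≤ t ∧ t ≤ -1 + 2*((i:ℝ)+1)/k := by
  have hk' : (0:ℝ) < k := Nat.cast_pos.mpr hk
  set j := ⌊(t+1)*k/2⌋₊ with hjdef
  have ht1 := ht.1
  have ht2 := ht.2
  have hnn : 0 ≤ (t+1)*k/2 := by nlinarith
  by_cases hjk : j < k
  · refine ⟨j, hjk, ?_, ?_⟩
    · have h1 : (j:ℝ) ≤ (t+1)*k/2 := Nat.floor_le hnn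
      have h2 : 2*(j:ℝ)/k ≤ t+1 := by rw [div_le_iff₀ hk']; nlinarith
      linarith
    · have h1 : (t+1)*k/2 < (j:ℝ)+1 := Nat.lt_floor_add_one _
      have h2 : t+1 ≤ 2*((j:ℝ)+1)/k := by rw [le_div_iff₀ hk']; nlinarith
      linarith
  · push_neg at hjk
    have hcast : (((k-1:ℕ)):ℝ) = (k:ℝ) - 1 := by
      rw [Nat.cast_sub hk]; simp
    refine ⟨k-1, Nat.sub_lt hk one_pos, ?_, ?_⟩
    · have hkj : (k:ℝ) ≤ (j:ℝ) := Nat.cast_le.mpr hjk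
      have h1 : (j:ℝ) ≤ (t+1)*k/2 := Nat.floor_le hnn
      have h2 : 2*((k:ℝ)-1)/k ≤ t+1 := by rw [div_le_iff₀ hk']; nlinarith
      rw [hcast]; linarith
    · rw [hcast]
      have h2 : 2*(((k:ℝ)-1)+1)/k = 2 := by field_simp; ring
      rw [h2]; linarith

theorem uniform_convergence_of_interval_measures_double_index
    (μseq : ℕ → Measure ℝ) (μ : Measure ℝ)
    [∀ n, IsProbabilityMeasure (μseq n)] [IsProbabilityMeasure μ]
    (hsupp : ∀ n, μseq n (Icc (0 : ℝ) 1) = 1) (hsuppμ : μ (Icc (0 : ℝ) 1) = 1)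
    (hac : μ ≪ volume)
    (hweak : ∀ φ : BoundedContinuousFunction ℝ ℝ,
      Tendsto (fun n => ∫ x, φ x ∂(μseq n)) atTop (nhds (∫ x, φ x ∂μ)))
    (aseq : ℕ → ℝ) (a : ℝ) (haseq : ∀ m, aseq m ∈ Icc (0 : ℝ) 1)
    (ha : Tendsto aseq atTop (nhds a))
    (g : ℕ → ℕ → ℝ → ℝ → ℝ) (g₀ : ℝ → ℝ → ℝ)
    (hgmaps : ∀ m n, ∀ u ∈ Icc (0 : ℝ) 1, ∀ v ∈ Icc (0 : ℝ) 1,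
      g m n u v ∈ Icc (0 : ℝ) 1)
    (hgbound : ∀ m n, ∀ u ∈ Icc (0 : ℝ) 1, ∀ v ∈ Icc (0 : ℝ) 1,
      aseq m ≤ g m n u v)
    (hg₀c : ContinuousOn (fun p : ℝ × ℝ => g₀ p.1 p.2) (Icc (0 : ℝ) 1 ×ˢ Icc (0 : ℝ) 1))
    (hg₀maps : ∀ u ∈ Icc (0 : ℝ) 1, ∀ v ∈ Icc (0 : ℝ) 1, g₀ u v ∈ Icc (0 : ℝ) 1)
    (hgconv : ∀ ε > 0, ∃ N : ℕ, ∀ m ≥ N, ∀ n ≥ N,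
      ∀ u ∈ Icc (0 : ℝ) 1, ∀ v ∈ Icc (0 : ℝ) 1, |g m n u v - g₀ u v| < ε) :
    ∀ ε > 0, ∃ N : ℕ, ∀ m ≥ N, ∀ n ≥ N,
      ∀ u ∈ Icc (0 : ℝ) 1, ∀ v ∈ Icc (0 : ℝ) 1,
        |((μseq n) (Icc (aseq m) (g m n u v))).toReal -
          (μ (Icc a (g₀ u v))).toReal| < ε := by
  intro ε hε
  set ε' : ℝ := ε / 8 with hε'def
  have hε' : 0 < ε' := by positivity
  -- CDF-type functions
  set F : ℝ → ℝ := fun x => (μ (Iic x)).toReal with hFdef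
  set Fn : ℕ → ℝ → ℝ := fun n x => ((μseq n) (Iic x)).toReal with hFndef
  have hF_mono : ∀ {s t : ℝ}, s ≤ t → F s ≤ F t := fun {s t} h =>
    ENNReal.toReal_mono (measure_ne_top _ _) (measure_mono (Iic_subset_Iic.mpr h))
  have hFn_mono : ∀ (n : ℕ) {s t : ℝ}, s ≤ t → Fn n s ≤ Fn n t := fun n {s t} h =>
    ENNReal.toReal_mono (measure_ne_top _ _) (measure_mono (Iic_subset_Iic.mpr h))
  -- Step 1: modulus of continuity of F from absolute continuity
  obtain ⟨δ, hδpos, hδ⟩ :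
      ∃ δ > (0:ℝ), ∀ s t : ℝ, s ≤ t → t - s ≤ δ → (μ (Ioc s t)).toReal ≤ ε' := by
    have hint : ∫⁻ x, μ.rnDeriv volume x ∂volume ≠ ⊤ := by
      rw [Measure.lintegral_rnDeriv hac]
      exact measure_ne_top μ univ
    obtain ⟨δ₀, hδ₀pos, hδ₀⟩ := exists_pos_setLIntegral_lt_of_measure_lt hint
      (ε := ENNReal.ofReal ε') (by simp [hε'])
    have key : ∀ s : Set ℝ, volume s < δ₀ → μ s < ENNReal.ofReal ε' := by
      intro s hs
      have := hδ₀ s hs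
      rwa [Measure.setLIntegral_rnDeriv hac] at this
    obtain ⟨δ, hδpos, hδlt⟩ : ∃ δ : ℝ, 0 < δ ∧ ENNReal.ofReal δ < δ₀ := by
      by_cases htop : δ₀ = ⊤
      · exact ⟨1, one_pos, by simp [htop]⟩
      · have h2 : 0 < δ₀.toReal := ENNReal.toReal_pos hδ₀pos.ne' htop
        refine ⟨δ₀.toReal / 2, by positivity, ?_⟩
        calc ENNReal.ofReal (δ₀.toReal / 2) < ENNReal.ofReal δ₀.toReal :=
              (ENNReal.ofReal_lt_ofReal_iff_of_nonneg (by positivity)).mpr (by linarith)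
          _ = δ₀ := ENNReal.ofReal_toReal htop
    refine ⟨δ, hδpos, fun s t hst hd => ?_⟩
    have hvol : volume (Ioc s t) < δ₀ := by
      rw [Real.volume_Ioc]
      exact lt_of_le_of_lt (ENNReal.ofReal_le_ofReal hd) hδlt
    have := key _ hvol
    calc (μ (Ioc s t)).toReal ≤ (ENNReal.ofReal ε').toReal :=
          ENNReal.toReal_mono (by simp) this.le
      _ = ε' := ENNReal.toReal_ofReal hε'.le
  have hFmod : ∀ s t : ℝ, s ≤ t → t - s ≤ δ → F t - F s ≤ ε' := by
    intro s t hst hd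
    have hmu : μ (Iic t) = μ (Iic s) + μ (Ioc s t) := by
      rw [← Iic_union_Ioc_eq_Iic hst, measure_union (Iic_disjoint_Ioc le_rfl) measurableSet_Ioc]
    have : F t = F s + (μ (Ioc s t)).toReal := by
      rw [hFdef]; simp only
      rw [hmu, ENNReal.toReal_add (measure_ne_top _ _) (measure_ne_top _ _)]
    linarith [hδ s t hst hd]
  have hFclose : ∀ s t : ℝ, |s - t| ≤ δ → |F s - F t| ≤ ε' := by
    intro s t hd
    rcases le_total s t with h | h
    · rw [abs_sub_comm, abs_of_nonneg (by linarith [hF_mono h])]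
      exact hFmod s t h (by rw [abs_sub_comm, abs_of_nonneg (by linarith)] at hd; linarith)
    · rw [abs_of_nonneg (by linarith [hF_mono h])]
      exact hFmod t s h (by rw [abs_of_nonneg (by linarith)] at hd; linarith)
  -- Step 2: pointwise convergence of Fn to F
  have hconv : ∀ x : ℝ, Tendsto (fun n => Fn n x) atTop (nhds (F x)) := by
    intro x
    set P : ℕ → ProbabilityMeasure ℝ := fun n => ⟨μseq n, inferInstance⟩
    set P0 : ProbabilityMeasure ℝ := ⟨μ, inferInstance⟩
    have hP : Tendsto P atTop (nhds P0) :=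
      ProbabilityMeasure.tendsto_iff_forall_integral_tendsto.mpr hweak
    have hnull : (P0 : Measure ℝ) (frontier (Iic x)) = 0 := by
      rw [frontier_Iic]
      exact hac (Real.volume_singleton)
    have h1 := ProbabilityMeasure.tendsto_measure_of_null_frontier_of_tendsto' hP hnull
    exact (ENNReal.tendsto_toReal (measure_ne_top _ _)).comp h1
  -- Step 3: grid and uniform convergence on [-1,1]
  obtain ⟨k, hk⟩ := exists_nat_gt (2 / δ)
  have hkpos : 0 < k := by
    by_contra h
    push_neg at h
    interval_cases k
    simp at hk
    have : 0 < 2 / δ := by positivity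
    linarith
  have hkR : (0:ℝ) < k := Nat.cast_pos.mpr hkpos
  have hspace : 2 / (k:ℝ) ≤ δ := by
    rw [div_le_iff₀ hkR]
    have h2 : 2 / δ * δ < k * δ := by
      apply mul_lt_mul_of_pos_right hk hδpos
    rw [div_mul_cancel₀] at h2
    · linarith
    · exact hδpos.ne'
  set x : ℕ → ℝ := fun i => -1 + 2*(i:ℝ)/k with hxdef
  have hNs : ∀ i : ℕ, ∃ N : ℕ, ∀ n ≥ N, |Fn n (x i) - F (x i)| < ε' := by
    intro i
    have := Metric.tendsto_atTop.mp (hconv (x i)) ε' hε'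
    obtain ⟨N, hN⟩ := this
    exact ⟨N, fun n hn => by simpa [Real.dist_eq] using hN n hn⟩
  choose Ns hNsspec using hNs
  set N1 : ℕ := (Finset.range (k+1)).sup Ns with hN1def
  have hN1 : ∀ i ≤ k, ∀ n ≥ N1, |Fn n (x i) - F (x i)| < ε' := by
    intro i hi n hn
    exact hNsspec i n (le_trans (Finset.le_sup (Finset.mem_range.mpr (Nat.lt_succ_of_le hi))) hn)
  have hunif : ∀ n ≥ N1, ∀ t ∈ Icc (-1:ℝ) 1, |Fn n t - F t| ≤ 2*ε' := by
    intro n hn t ht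
    obtain ⟨i, hik, hx1, hx2⟩ := aux_grid hkpos ht
    have hx1' : x i ≤ t := hx1
    have hx2' : t ≤ x (i+1) := by
      rw [hxdef]; push_cast; exact hx2
    have hxi1 : x i ≤ x (i+1) := le_trans hx1' hx2'
    have hsp : x (i+1) - x i ≤ δ := by
      have : x (i+1) - x i = 2 / (k:ℝ) := by
        rw [hxdef]; push_cast; field_simp; ring
      rw [this]; exact hspace
    have hFi : F (x (i+1)) - F (x i) ≤ ε' := hFmod _ _ hxi1 hsp
    obtain ⟨c1, d1⟩ := abs_lt.mp (hN1 i hik.le n hn)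
    obtain ⟨c2, d2⟩ := abs_lt.mp (hN1 (i+1) hik n hn)
    have m1 : Fn n (x i) ≤ Fn n t := hFn_mono n hx1'
    have m2 : Fn n t ≤ Fn n (x (i+1)) := hFn_mono n hx2'
    have m3 : F (x i) ≤ F t := hF_mono hx1'
    have m4 : F t ≤ F (x (i+1)) := hF_mono hx2'
    rw [abs_le]
    constructor <;> linarith
  -- Step 4: lower endpoint (open) versions
  set δ' : ℝ := min δ 1 with hδ'def
  have hδ'pos : 0 < δ' := lt_min hδpos one_pos
  have hδ'δ : δ' ≤ δ := min_le_left _ _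
  have hδ'1 : δ' ≤ 1 := min_le_right _ _
  have hIio : ∀ n ≥ N1, ∀ s ∈ Icc (0:ℝ) 1, |((μseq n) (Iio s)).toReal - F s| ≤ 3*ε' := by
    intro n hn s hs
    have h1 : Fn n (s - δ') ≤ ((μseq n) (Iio s)).toReal :=
      ENNReal.toReal_mono (measure_ne_top _ _)
        (measure_mono (Iic_subset_Iio.mpr (by linarith)))
    have h2 : ((μseq n) (Iio s)).toReal ≤ Fn n s :=
      ENNReal.toReal_mono (measure_ne_top _ _) (measure_mono Iio_subset_Iic_self)
    have hm1 : s - δ' ∈ Icc (-1:ℝ) 1 :=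
      ⟨by linarith [hs.1], by linarith [hs.2]⟩
    have hm2 : s ∈ Icc (-1:ℝ) 1 := ⟨by linarith [hs.1], hs.2⟩
    obtain ⟨a1, b1⟩ := abs_le.mp (hunif n hn _ hm1)
    obtain ⟨a2, b2⟩ := abs_le.mp (hunif n hn _ hm2)
    have hmod : F s - F (s - δ') ≤ ε' := hFmod _ _ (by linarith) (by linarith)
    rw [abs_le]
    constructor <;> linarith
  -- Step 5: no atom at a for μ
  have hμIioa : (μ (Iio a)).toReal = F a := by
    have h0 : μ {a} = 0 := hac Real.volume_singleton
    have h : μ (Iic a) = μ (Iio a) := by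
      refine le_antisymm ?_ (measure_mono Iio_subset_Iic_self)
      rw [← Iio_union_right]
      exact (measure_union_le _ _).trans (by rw [h0, add_zero])
    rw [hFdef]; simp only; rw [h]
  have haI : a ∈ Icc (0:ℝ) 1 := isClosed_Icc.mem_of_tendsto ha (Eventually.of_forall haseq)
  -- Step 6: choose indices
  obtain ⟨N2, hN2⟩ := Metric.tendsto_atTop.mp ha δ hδpos
  obtain ⟨N3, hN3⟩ := hgconv δ hδpos
  refine ⟨max N1 (max N2 N3), fun m hm n hn u hu v hv => ?_⟩
  have hmN2 : m ≥ N2 := le_trans (le_trans (le_max_left _ _) (le_max_right _ _)) hm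
  have hmN3 : m ≥ N3 := le_trans (le_trans (le_max_right _ _) (le_max_right _ _)) hm
  have hnN1 : n ≥ N1 := le_trans (le_max_left _ _) hn
  have hnN3 : n ≥ N3 := le_trans (le_trans (le_max_right _ _) (le_max_right _ _)) hn
  have htmem := hgmaps m n u hu v hv
  have ht0mem := hg₀maps u hu v hv
  have hamt : aseq m ≤ g m n u v := hgbound m n u hu v hv
  have hat0 : a ≤ g₀ u v := by
    apply le_of_forall_pos_le_add
    intro η hη
    obtain ⟨N', hN'⟩ := hgconv η hη
    have hev : ∀ᶠ m' in atTop, aseq m' ≤ g₀ u v + η := by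
      filter_upwards [eventually_ge_atTop N'] with m' hm'
      have h1 := hgbound m' N' u hu v hv
      obtain ⟨h2, h3⟩ := abs_lt.mp (hN' m' hm' N' le_rfl u hu v hv)
      linarith
    exact le_of_tendsto ha hev
  have hL : ((μseq n) (Icc (aseq m) (g m n u v))).toReal
      = Fn n (g m n u v) - ((μseq n) (Iio (aseq m))).toReal := aux_split _ hamt
  have hR : (μ (Icc a (g₀ u v))).toReal = F (g₀ u v) - F a := by
    rw [aux_split μ hat0, hμIioa]
  obtain ⟨c1, d1⟩ := abs_le.mp (hunif n hnN1 (g m n u v) ⟨by linarith [htmem.1], htmem.2⟩)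
  obtain ⟨c2, d2⟩ := abs_le.mp (hFclose (g m n u v) (g₀ u v)
    (le_of_lt (hN3 m hmN3 n hnN3 u hu v hv)))
  obtain ⟨c3, d3⟩ := abs_le.mp (hIio n hnN1 (aseq m) (haseq m))
  obtain ⟨c4, d4⟩ := abs_le.mp (hFclose (aseq m) a (by
    have := hN2 m hmN2
    rw [Real.dist_eq] at this
    exact this.le))
  rw [hL, hR, abs_lt]
  constructor <;> (rw [hε'def] at *; linarith)
end
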